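/- In any bounded quasisemilattice, any finite nonempty set of elements has only finitely many maximal lower bounds, and every common lower bound of the set lies below some maximal lower bound. -/

import Mathlib

/-- The set of maximal lower bounds of `p` and `q` in a poset. -/
def MLB {α : Type*} [PartialOrder α] (p q : α) : Set α :=
  {r | r ≤ p ∧ r ≤ q ∧ ∀ s : α, s ≤ p → s ≤ q → r ≤ s → r = s}

/-- A quasisemilattice: every pair of elements has finitely many maximal lower
bounds, and every common lower bound lies below one of them. -/
def IsQSL (α : Type*) [PartialOrder α] : Prop :=
  ∀ p q : α, (MLB p q).Finite ∧ ∀ r : α, r ≤ p → r ≤ q → ∃ s ∈ MLB p q, r ≤ s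

/-- In a bounded quasisemilattice, any finite nonempty set of elements has only
finitely many maximal lower bounds, and every common lower bound of the set lies
below some maximal lower bound. -/
theorem stmt_1 {α : Type*} [PartialOrder α] [OrderBot α] (hq : IsQSL α)
    (S : Finset α) (hS : S.Nonempty) :
    {r : α | (∀ p ∈ S, r ≤ p) ∧
        ∀ s : α, (∀ p ∈ S, s ≤ p) → r ≤ s → r = s}.Finite ∧
    ∀ r : α, (∀ p ∈ S, r ≤ p) →
      ∃ s, ((∀ p ∈ S, s ≤ p) ∧ ∀ t : α, (∀ p ∈ S, t ≤ p) → s ≤ t → s = t) ∧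
        r ≤ s := by
  classical
  induction hS using Finset.Nonempty.cons_induction with
  | singleton a =>
    constructor
    · apply Set.Finite.subset (Set.finite_singleton a)
      rintro r ⟨h1, h2⟩
      simp only [Finset.mem_singleton] at h1 h2
      exact h2 a (fun p hp => hp ▸ le_rfl) (h1 a rfl)
    · intro r hr
      exact ⟨a, ⟨by simp, fun t ht hat => le_antisymm hat (by simpa using ht)⟩,
        by simpa using hr⟩
  | cons a S ha hS ih =>
    obtain ⟨Mfin, Mdom⟩ := ih
    set M := {r : α | (∀ p ∈ S, r ≤ p) ∧
        ∀ s : α, (∀ p ∈ S, s ≤ p) → r ≤ s → r = s} with hM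
    set T := ⋃ m ∈ M, MLB a m with hT
    have hTfin : T.Finite := Set.Finite.biUnion Mfin (fun m _ => (hq a m).1)
    -- every element of T is a lower bound of cons a S
    have hTlb : ∀ t ∈ T, t ≤ a ∧ ∀ p ∈ S, t ≤ p := by
      intro t ht
      simp only [hT, Set.mem_iUnion] at ht
      obtain ⟨m, hm, hta, htm, -⟩ := ht
      exact ⟨hta, fun p hp => le_trans htm (hm.1 p hp)⟩
    -- every lower bound of cons a S is below an element of T
    have hdom : ∀ r : α, r ≤ a → (∀ p ∈ S, r ≤ p) → ∃ t ∈ T, r ≤ t := by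
      intro r hra hrS
      obtain ⟨m, hm, hrm⟩ := Mdom r hrS
      obtain ⟨s, hs, hrs⟩ := (hq a m).2 r hra hrm
      exact ⟨s, by simp only [hT, Set.mem_iUnion]; exact ⟨m, hm, hs⟩, hrs⟩
    have hlb : ∀ r : α, (∀ p ∈ Finset.cons a S ha, r ≤ p) ↔
        (r ≤ a ∧ ∀ p ∈ S, r ≤ p) := by
      intro r
      constructor
      · intro h
        exact ⟨h a (Finset.mem_cons_self a S), fun p hp => h p (Finset.mem_cons_of_mem hp)⟩
      · rintro ⟨h1, h2⟩ p hp
        rcases Finset.mem_cons.mp hp with rfl | hp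
        · exact h1
        · exact h2 p hp
    constructor
    · apply Set.Finite.subset hTfin
      rintro r ⟨h1, h2⟩
      have h1' := (hlb r).mp h1
      obtain ⟨t, htT, hrt⟩ := hdom r h1'.1 h1'.2
      have := h2 t ((hlb t).mpr (hTlb t htT)) hrt
      rwa [this]
    · intro r hr
      have hr' := (hlb r).mp hr
      obtain ⟨t₀, ht₀T, hrt₀⟩ := hdom r hr'.1 hr'.2
      have hT'fin : {t ∈ T | r ≤ t}.Finite := hTfin.subset (fun x hx => hx.1)
      obtain ⟨t, ⟨htT, hrt⟩, hmax'⟩ := Set.Finite.exists_maximal hT'fin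
        ⟨t₀, ht₀T, hrt₀⟩
      have hmax : ∀ b ∈ {t ∈ T | r ≤ t}, id t ≤ id b → t = b :=
        fun b hb h => le_antisymm h (hmax' hb h)
      refine ⟨t, ⟨(hlb t).mpr (hTlb t htT), ?_⟩, hrt⟩
      intro s hs hts
      have hs' := (hlb s).mp hs
      obtain ⟨t₁, ht₁T, hst₁⟩ := hdom s hs'.1 hs'.2
      have : t = t₁ := hmax t₁ ⟨ht₁T, le_trans hrt (le_trans hts hst₁)⟩
        (le_trans hts hst₁)
      exact le_antisymm hts (this ▸ hst₁)
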